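/- arXiv:1401.7719 — 3 statements merged into one kernel-verified Lean document; each statement's English description precedes it below -/
import Mathlib

section
/- Let A be a normal subgroup of a finite group G such that G/A is a π-group, and let U be a π-Hall subgroup of A. Then there exists a π-Hall subgroup H of G with H ∩ A = U if and only if the G-conjugacy class of U equals its A-conjugacy class, i.e., U^G = U^A. -/
def IsPiNumber (π : Set ℕ) (n : ℕ) : Prop := ∀ p : ℕ, p.Prime → p ∣ n → p ∈ π

def IsHallSubgroup {G : Type*} [Group G] (π : Set ℕ) (H : Subgroup G) : Prop :=
  IsPiNumber π (Nat.card H) ∧ ∀ p : ℕ, p.Prime → p ∣ H.index → p ∉ π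

def conjSub {G : Type*} [Group G] (g : G) (H : Subgroup G) : Subgroup G :=
  H.map (MulAut.conj g).toMonoidHom

open scoped Pointwise

lemma mem_conjSub {G : Type*} [Group G] {g x : G} {U : Subgroup G} :
    x ∈ conjSub g U ↔ g⁻¹ * x * g ∈ U := by
  constructor
  · rintro ⟨u, hu, rfl⟩
    simpa [mul_assoc] using hu
  · intro h
    refine ⟨g⁻¹ * x * g, h, ?_⟩
    show g * (g⁻¹ * x * g) * g⁻¹ = x
    group

lemma conjSub_conjSub {G : Type*} [Group G] (x y : G) (U : Subgroup G) :
    conjSub x (conjSub y U) = conjSub (x * y) U := by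
  ext z
  simp only [mem_conjSub, mul_inv_rev, mul_assoc]

/-- If `A ⊴ G` with `G/A` a `π`-group and `U` is a `π`-Hall subgroup of `A`, then a
`π`-Hall subgroup `H` of `G` with `H ∩ A = U` exists iff `U^G = U^A`. -/
theorem hall_extension_iff_class_invariant {G : Type*} [Group G] [Finite G] (π : Set ℕ)
    (A U : Subgroup G) [A.Normal] (hquot : IsPiNumber π A.index)
    (hUA : U ≤ A) (hU : IsHallSubgroup π (U.subgroupOf A)) :
    (∃ H : Subgroup G, IsHallSubgroup π H ∧ H ⊓ A = U) ↔
      {K : Subgroup G | ∃ g : G, K = conjSub g⁻¹ U} =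
        {K : Subgroup G | ∃ a ∈ A, K = conjSub a⁻¹ U} := by

  constructor
  · rintro ⟨H, ⟨hHcard, hHind⟩, hHA⟩
    ext K
    simp only [Set.mem_setOf_eq]
    constructor
    · rintro ⟨g, rfl⟩
      -- H ⊔ A = ⊤
      have hsup : H ⊔ A = ⊤ := by
        rw [← Subgroup.index_eq_one]
        by_contra hne
        obtain ⟨p, hp, hpd⟩ := Nat.exists_prime_and_dvd hne
        exact hHind p hp (hpd.trans (Subgroup.index_dvd_of_le le_sup_left))
          (hquot p hp (hpd.trans (Subgroup.index_dvd_of_le le_sup_right)))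
      have hg : g ∈ (H : Set G) * (A : Set G) := by
        rw [← Subgroup.mul_normal, hsup]; trivial
      obtain ⟨h, hh, a, ha, rfl⟩ := hg
      refine ⟨a, ha, ?_⟩
      have hconjH : conjSub h⁻¹ U = U := by
        ext x
        rw [mem_conjSub, inv_inv, ← hHA]
        simp only [Subgroup.mem_inf]
        constructor
        · rintro ⟨h1, h2⟩
          constructor
          · have := mul_mem (mul_mem (inv_mem hh) h1) hh
            simpa [mul_assoc] using this
          · have := Subgroup.Normal.conj_mem ‹A.Normal› _ h2 h⁻¹
            simpa [mul_assoc] using this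
        · rintro ⟨h1, h2⟩
          exact ⟨mul_mem (mul_mem hh h1) (inv_mem hh),
            Subgroup.Normal.conj_mem ‹A.Normal› _ h2 h⟩
      rw [mul_inv_rev, ← conjSub_conjSub, hconjH]
    · rintro ⟨a, ha, rfl⟩
      exact ⟨a, rfl⟩
  · intro hset
    -- U^G = U^A gives Frattini-type factorization: G = N_G(U) * A
    have key : ∀ g : G, ∃ a ∈ A, g * a⁻¹ ∈ Subgroup.normalizer (U : Set G) := by
      intro g
      have : conjSub g⁻¹ U ∈ {K : Subgroup G | ∃ a ∈ A, K = conjSub a⁻¹ U} := by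
        rw [← hset]; exact ⟨g, rfl⟩
      obtain ⟨a, ha, heq⟩ := this
      refine ⟨a, ha, ?_⟩
      rw [Subgroup.mem_normalizer_iff]
      intro h
      have e1 : a * (a⁻¹ * h * a) * a⁻¹ = h := by group
      have h1 : a⁻¹ * h * a ∈ conjSub a⁻¹ U ↔ h ∈ U := by
        rw [mem_conjSub, inv_inv, e1]
      have e2 : g * (a⁻¹ * h * a) * g⁻¹ = g * a⁻¹ * h * (g * a⁻¹)⁻¹ := by group
      have h2 : a⁻¹ * h * a ∈ conjSub g⁻¹ U ↔ g * a⁻¹ * h * (g * a⁻¹)⁻¹ ∈ U := by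
        rw [mem_conjSub, inv_inv, e2]
      rw [← h1, ← heq, h2]
    set N := Subgroup.normalizer (U : Set G) with hN
    have hUN : U ≤ N := Subgroup.le_normalizer
    have hNA : N ⊔ A = ⊤ := by
      rw [Subgroup.eq_top_iff']
      intro g
      obtain ⟨a, ha, hm⟩ := key g
      have : g = g * a⁻¹ * a := by group
      rw [this]
      exact mul_mem ((le_sup_left : N ≤ N ⊔ A) hm) ((le_sup_right : A ≤ N ⊔ A) ha)
    have hAN : A.relIndex N = A.index := by
      have := Subgroup.relIndex_sup_right N A
      rw [hNA, Subgroup.relIndex_top_right] at this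
      exact this.symm
    -- set up the quotient N / U
    set U' : Subgroup N := U.subgroupOf N with hU'
    haveI : U'.Normal := Subgroup.normal_in_normalizer
    set mk : N →* N ⧸ U' := QuotientGroup.mk' U' with hmk
    have hmksurj : Function.Surjective mk := QuotientGroup.mk'_surjective U'
    set M : Subgroup N := A.subgroupOf N with hM
    haveI : M.Normal := Subgroup.normal_subgroupOf
    set M' : Subgroup (N ⧸ U') := M.map mk with hM'
    haveI : M'.Normal := Subgroup.Normal.map ‹M.Normal› mk hmksurj
    have hkerU : mk.ker = U' := QuotientGroup.ker_mk' U'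
    have hU'M : U' ≤ M := fun x hx => hUA hx
    have hcomapM' : M'.comap mk = M := by
      rw [hM', Subgroup.comap_map_eq, hkerU, sup_of_le_left hU'M]
    have hM'index : M'.index = A.index := by
      rw [← Subgroup.index_comap_of_surjective M' hmksurj, hcomapM', hM]
      exact hAN
    -- various nonzero indices
    have hAindne : A.index ≠ 0 := Subgroup.index_ne_zero_of_finite
    -- card M' = U.relIndex (N ⊓ A)
    have hcardQ : Nat.card (N ⧸ U') = U.relIndex N := (Subgroup.index_eq_card U').symm
    have hcardM' : Nat.card M' * A.index = U.relIndex N := by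
      have := Subgroup.card_mul_index M'
      rw [hM'index, hcardQ] at this
      exact this
    have hUinfNA : U ≤ N ⊓ A := le_inf hUN hUA
    have hinfrel : (N ⊓ A).relIndex N = A.relIndex N := by
      unfold Subgroup.relIndex
      rw [Subgroup.inf_subgroupOf_left]
    have hrel1 : U.relIndex (N ⊓ A) * A.index = U.relIndex N := by
      rw [← hAN, ← hinfrel]
      exact Subgroup.relIndex_mul_relIndex U (N ⊓ A) N hUinfNA inf_le_left
    have hcardM'eq : Nat.card M' = U.relIndex (N ⊓ A) :=
      Nat.eq_of_mul_eq_mul_right (Nat.pos_of_ne_zero hAindne) (hcardM'.trans hrel1.symm)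
    have hMdvd : Nat.card M' ∣ U.relIndex A := by
      rw [hcardM'eq]
      exact Dvd.intro _ (Subgroup.relIndex_mul_relIndex U (N ⊓ A) A hUinfNA inf_le_right)
    -- coprimality
    have hcop : Nat.Coprime (Nat.card M') M'.index := by
      by_contra hnc
      obtain ⟨p, hp, hpd⟩ := Nat.exists_prime_and_dvd hnc
      exact hU.2 p hp ((hpd.trans (Nat.gcd_dvd_left _ _)).trans hMdvd)
        (hquot p hp (hM'index ▸ hpd.trans (Nat.gcd_dvd_right _ _)))
    obtain ⟨K', hK'⟩ := Subgroup.exists_right_complement'_of_coprime hcop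
    set K : Subgroup N := K'.comap mk with hK
    set H : Subgroup G := K.map N.subtype with hH
    have hHN : H ≤ N := Subgroup.map_subtype_le K
    have hUH : U ≤ H := by
      have h1 : U' ≤ K :=
        le_trans (le_of_eq hkerU.symm) (Subgroup.ker_le_comap mk K')
      have := Subgroup.map_mono (f := N.subtype) h1
      rwa [Subgroup.subgroupOf_map_subtype, inf_of_le_left hUN] at this
    have hHA : H ⊓ A = U := by
      apply le_antisymm
      · rintro x ⟨hxH, hxA⟩
        obtain ⟨k, hk, rfl⟩ := hxH
        have hkM : k ∈ M := hxA
        have hkK' : mk k ∈ K' := hk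
        have hkM' : mk k ∈ M' := Subgroup.mem_map_of_mem mk hkM
        have : mk k ∈ M' ⊓ K' := ⟨hkM', hkK'⟩
        rw [hK'.disjoint.eq_bot] at this
        have hker : k ∈ U' := by
          rw [← hkerU]
          exact this
        exact hker
      · exact le_inf hUH hUA
    -- index computation
    have hHrelN : H.relIndex N = Nat.card M' := by
      have h1 : H.subgroupOf N = K :=
        Subgroup.comap_map_eq_self_of_injective N.subtype_injective K
      show (H.subgroupOf N).index = _
      rw [h1, hK, Subgroup.index_comap_of_surjective K' hmksurj, hK'.index_eq_card]
    have hANne : A.relIndex N ≠ 0 := Subgroup.index_ne_zero_of_finite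
    have hHindex : H.index = U.relIndex A := by
      have h1 : H.index * A.relIndex N = U.relIndex A * A.relIndex N := by
        rw [← Subgroup.relIndex_mul_index hHN, hHrelN, hcardM'eq]
        calc U.relIndex (N ⊓ A) * N.index * A.relIndex N
            = U.relIndex (N ⊓ A) * A.relIndex N * N.index := by ring
          _ = U.relIndex (N ⊓ A) * A.index * N.index := by rw [hAN]
          _ = U.relIndex N * N.index := by rw [hrel1]
          _ = U.index := Subgroup.relIndex_mul_index hUN
          _ = U.relIndex A * A.index := (Subgroup.relIndex_mul_index hUA).symm
          _ = U.relIndex A * A.relIndex N := by rw [hAN]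
      exact Nat.eq_of_mul_eq_mul_right (Nat.pos_of_ne_zero hANne) h1
    -- card computation
    have hcardU : Nat.card (U.subgroupOf A) = Nat.card U :=
      Nat.card_congr (Subgroup.subgroupOfEquivOfLe hUA).toEquiv
    have hUrelne : U.relIndex A ≠ 0 := Subgroup.index_ne_zero_of_finite
    have hHindne : H.index ≠ 0 := Subgroup.index_ne_zero_of_finite
    have hcardH : Nat.card H = Nat.card U * A.index := by
      have h2 : Nat.card U * U.relIndex A * A.index = Nat.card G := by
        rw [← hcardU]
        have h3 : Nat.card (U.subgroupOf A) * (U.subgroupOf A).index = Nat.card A :=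
          Subgroup.card_mul_index _
        rw [show ((U.subgroupOf A).index : ℕ) = U.relIndex A from rfl] at h3
        rw [h3]
        exact Subgroup.card_mul_index A
      have h1 : Nat.card H * H.index = Nat.card U * A.index * H.index := by
        rw [Subgroup.card_mul_index, hHindex, ← h2]; ring
      exact Nat.eq_of_mul_eq_mul_right (Nat.pos_of_ne_zero hHindne) h1
    refine ⟨H, ⟨?_, ?_⟩, hHA⟩
    · intro p hp hpd
      rw [hcardH] at hpd
      rcases (Nat.Prime.dvd_mul hp).mp hpd with h | h
      · exact hU.1 p hp (hcardU ▸ h)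
      · exact hquot p hp h
    · intro p hp hpd
      rw [hHindex] at hpd
      exact hU.2 p hp hpd
end

section
/- Let π be a set of primes, G a finite group possessing a π-Hall subgroup, A ⊴ G, and H a π-Hall subgroup of A with G = A * N_G(H). Then N_G(H) possesses a π-Hall subgroup, and every π-Hall subgroup of N_G(H) is a π-Hall subgroup of G. -/
open Subgroup

/-- If `G = C * D` then the index of `D ∩ C` in `C` equals the index of `D` in `G`. -/
lemma relindex_eq_index_of_mul {G : Type*} [Group G] (C D : Subgroup G)
    (h : ∀ g : G, ∃ c ∈ C, ∃ d ∈ D, g = c * d) : D.relIndex C = D.index := by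
  have key : Function.Bijective
      (Quotient.map' (Subtype.val : C → G)
        (fun a b hab => by
          rw [QuotientGroup.leftRel_apply] at hab ⊢
          simpa [Subgroup.mem_subgroupOf] using hab) :
        C ⧸ D.subgroupOf C → G ⧸ D) := by
    constructor
    · intro x y
      induction x using Quotient.inductionOn' with
      | h a =>
      induction y using Quotient.inductionOn' with
      | h b =>
      intro hxy
      rw [Quotient.map'_mk'', Quotient.map'_mk''] at hxy
      have := Quotient.exact' hxy
      rw [QuotientGroup.leftRel_apply] at this
      apply Quotient.sound'
      rw [QuotientGroup.leftRel_apply]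
      simpa [Subgroup.mem_subgroupOf] using this
    · intro x
      induction x using Quotient.inductionOn' with
      | h g =>
      obtain ⟨c, hc, d, hd, rfl⟩ := h g
      refine ⟨Quotient.mk'' ⟨c, hc⟩, ?_⟩
      rw [Quotient.map'_mk'']
      apply Quotient.sound'
      rw [QuotientGroup.leftRel_apply]
      simpa using hd
  rw [relIndex, index_eq_card, index_eq_card]
  exact Nat.card_eq_of_bijective _ key

lemma isPiNumber_of_dvd {π : Set ℕ} {m n : ℕ} (h : m ∣ n) (hn : IsPiNumber π n) :
    IsPiNumber π m := fun p hp hpd => hn p hp (hpd.trans h)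

lemma isPiNumber_mul {π : Set ℕ} {m n : ℕ} (hm : IsPiNumber π m) (hn : IsPiNumber π n) :
    IsPiNumber π (m * n) := fun p hp hpd => by
  rcases (Nat.Prime.dvd_mul hp).mp hpd with h | h
  · exact hm p hp h
  · exact hn p hp h

lemma coprime_of_pi {π : Set ℕ} {m n : ℕ} (hm : IsPiNumber π m)
    (hn : ∀ p : ℕ, p.Prime → p ∣ n → p ∉ π) : Nat.Coprime n m := by
  by_contra hc
  obtain ⟨p, hp, hpd⟩ := Nat.exists_prime_and_dvd hc
  exact hn p hp (hpd.trans (Nat.gcd_dvd_left n m)) (hm p hp (hpd.trans (Nat.gcd_dvd_right n m)))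

/-- If `G` has a `π`-Hall subgroup, `A ⊴ G`, and `H` is a `π`-Hall subgroup of `A`
with `G = A * N_G(H)`, then `N_G(H)` has a `π`-Hall subgroup and every `π`-Hall
subgroup of `N_G(H)` is a `π`-Hall subgroup of `G`. -/
theorem hall_of_normalizer {G : Type*} [Group G] [Finite G] (π : Set ℕ)
    (A H : Subgroup G) [A.Normal] (hG : ∃ K : Subgroup G, IsHallSubgroup π K)
    (hHA : H ≤ A) (hH : IsHallSubgroup π (H.subgroupOf A))
    (hfrat : ∀ g : G, ∃ a ∈ A, ∃ m ∈ Subgroup.normalizer (H : Set G), g = a * m) :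
    (∃ Y : Subgroup G, Y ≤ Subgroup.normalizer (H : Set G) ∧ IsHallSubgroup π (Y.subgroupOf (Subgroup.normalizer (H : Set G)))) ∧
      ∀ Y : Subgroup G, Y ≤ Subgroup.normalizer (H : Set G) → IsHallSubgroup π (Y.subgroupOf (Subgroup.normalizer (H : Set G))) →
        IsHallSubgroup π Y := by
  set N := Subgroup.normalizer (H : Set G) with hNdef
  have hHN : H ≤ N := le_normalizer
  have hHAN : H ≤ A ⊓ N := le_inf hHA hHN
  -- the index of N in G is a π'-number
  have hNrel : N.relIndex A = N.index := relindex_eq_index_of_mul A N hfrat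
  have hNdvd : N.index ∣ (H.subgroupOf A).index := by
    rw [← hNrel, ← inf_relIndex_left A N]
    have := relIndex_mul_relIndex H (A ⊓ N) A hHAN inf_le_left
    exact Dvd.intro_left _ this
  have hNpi' : ∀ p : ℕ, p.Prime → p ∣ N.index → p ∉ π :=
    fun p hp hpd => hH.2 p hp (hpd.trans hNdvd)
  constructor
  · -- existence of a π-Hall subgroup of N
    obtain ⟨K, hK⟩ := hG
    set φ := QuotientGroup.mk' A with hφdef
    have hφsurj : Function.Surjective φ := QuotientGroup.mk'_surjective A
    set S := K ⊔ A with hSdef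
    have hSindex : ∀ p : ℕ, p.Prime → p ∣ S.index → p ∉ π := fun p hp hpd =>
      hK.2 p hp (hpd.trans (index_dvd_of_le le_sup_left))
    have hmapS : S.map φ = K.map φ := by
      have hbot : A.map φ = ⊥ :=
        (Subgroup.map_eq_bot_iff A).mpr (le_of_eq (QuotientGroup.ker_mk' A).symm)
      rw [hSdef, Subgroup.map_sup, hbot, sup_bot_eq]
    have hScard : IsPiNumber π (A.relIndex S) := by
      have h1 : A.relIndex S = Nat.card (S.map φ) := by
        rw [← relIndex_ker, QuotientGroup.ker_mk']
      have h2 : Nat.card (K.map φ) ∣ Nat.card K := by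
        rw [← relIndex_ker K φ]
        show (φ.ker.subgroupOf K).index ∣ Nat.card K
        exact index_dvd_card (φ.ker.subgroupOf K)
      rw [h1, hmapS]
      exact isPiNumber_of_dvd h2 hK.1
    set M := N ⊓ S with hMdef
    have hMN : M ≤ N := inf_le_left
    have hMS : M ≤ S := inf_le_right
    have hHM : H ≤ M := le_inf hHN (le_trans hHA le_sup_right)
    -- the relative index of M in N is a π'-number
    have hNSmul : ∀ g : G, ∃ c ∈ N, ∃ d ∈ S, g = c * d := by
      intro g
      obtain ⟨a, ha, m, hm, rfl⟩ := hfrat g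
      have hconj : m⁻¹ * a * m ∈ A := by
        simpa using Subgroup.Normal.conj_mem ‹A.Normal› a ha m⁻¹
      exact ⟨m, hm, m⁻¹ * a * m, Subgroup.mem_sup_right hconj, by group⟩
    have hMrel : ∀ p : ℕ, p.Prime → p ∣ M.relIndex N → p ∉ π := by
      have e1 : M.relIndex N = S.relIndex N := by
        rw [hMdef, inf_relIndex_left]
      have e2 : S.relIndex N = S.index := relindex_eq_index_of_mul N S hNSmul
      intro p hp hpd
      rw [e1, e2] at hpd
      exact hSindex p hp hpd
    -- the relative index of A in M is a π-number
    have hMA : IsPiNumber π (A.relIndex M) := by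
      have h1 : A.relIndex M = Nat.card (M.map φ) := by
        rw [← relIndex_ker, QuotientGroup.ker_mk']
      have h2 : Nat.card (M.map φ) ∣ Nat.card (S.map φ) :=
        card_dvd_of_le (Subgroup.map_mono hMS)
      have h3 : A.relIndex S = Nat.card (S.map φ) := by
        rw [← relIndex_ker, QuotientGroup.ker_mk']
      rw [h1]
      exact isPiNumber_of_dvd h2 (h3 ▸ hScard)
    -- now work inside M
    set A₁ := A.subgroupOf M with hA₁def
    set H₁ := H.subgroupOf M with hH₁def
    have hH₁A₁ : H₁ ≤ A₁ := fun x hx => hHA hx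
    haveI instH₁ : H₁.Normal := by
      rw [hH₁def, normal_subgroupOf_iff hHM]
      intro h k hh hk
      exact (mem_normalizer_iff.mp (hMN hk) h).mp hh
    have hH₁card : IsPiNumber π (Nat.card H₁) := by
      have e : Nat.card H₁ = Nat.card (H.subgroupOf A) :=
        Nat.card_congr ((subgroupOfEquivOfLe hHM).toEquiv.trans
          (subgroupOfEquivOfLe hHA).toEquiv.symm)
      rw [e]; exact hH.1
    have hA₁H₁ : ∀ p : ℕ, p.Prime → p ∣ H₁.relIndex A₁ → p ∉ π := by
      have e0 : A₁ = (A ⊓ M).subgroupOf M := by rw [inf_subgroupOf_right]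
      have e1 : H₁.relIndex A₁ = H.relIndex (A ⊓ M) := by
        rw [hH₁def, e0, relIndex_subgroupOf inf_le_right]
      have e2 : H.relIndex (A ⊓ M) ∣ H.relIndex A :=
        ⟨_, (relIndex_mul_relIndex H (A ⊓ M) A (le_inf hHA hHM) inf_le_left).symm⟩
      intro p hp hpd
      exact hH.2 p hp ((hpd.trans (e1 ▸ e2)))
    have hA₁index : IsPiNumber π A₁.index := by
      have : A₁.index = A.relIndex M := rfl
      rw [this]; exact hMA
    -- quotient by H₁ and apply Schur-Zassenhaus
    set ψ := QuotientGroup.mk' H₁ with hψdef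
    have hψsurj : Function.Surjective ψ := QuotientGroup.mk'_surjective H₁
    have hψker : ψ.ker = H₁ := QuotientGroup.ker_mk' H₁
    set Abar := A₁.map ψ with hAbardef
    haveI instAbar : Abar.Normal :=
      Subgroup.Normal.map inferInstance ψ hψsurj
    have hAbarcard : ∀ p : ℕ, p.Prime → p ∣ Nat.card Abar → p ∉ π := by
      have e : Nat.card Abar = H₁.relIndex A₁ := by
        rw [hAbardef, ← relIndex_ker, hψker]
      rw [e]; exact hA₁H₁
    have hAbarindex : Abar.index = A₁.index :=
      index_map_eq A₁ hψsurj (hψker.le.trans hH₁A₁)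
    have hcop : Nat.Coprime (Nat.card Abar) Abar.index :=
      coprime_of_pi (hAbarindex ▸ hA₁index) hAbarcard
    obtain ⟨C, hC⟩ := Subgroup.exists_right_complement'_of_coprime hcop
    have hCcard : IsPiNumber π (Nat.card C) := by
      have e : Abar.index = Nat.card C := hC.symm.index_eq_card
      rw [← e, hAbarindex]; exact hA₁index
    have hCindex : ∀ p : ℕ, p.Prime → p ∣ C.index → p ∉ π := by
      have e : C.index = Nat.card Abar := hC.index_eq_card
      rw [e]; exact hAbarcard
    -- pull back the complement
    set Y₂ := C.comap ψ with hY₂def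
    have hkerY₂ : ψ.ker ≤ Y₂ := by
      intro x hx
      simp only [hY₂def, Subgroup.mem_comap]
      have : ψ x = 1 := hx
      rw [this]; exact C.one_mem
    have hY₂card : IsPiNumber π (Nat.card Y₂) := by
      have e1 : Nat.card (ψ.ker.subgroupOf Y₂) * (ψ.ker.subgroupOf Y₂).index = Nat.card Y₂ :=
        Subgroup.card_mul_index _
      have e2 : Nat.card (ψ.ker.subgroupOf Y₂) = Nat.card H₁ := by
        rw [hψker]; exact Nat.card_congr (subgroupOfEquivOfLe (hψker ▸ hkerY₂)).toEquiv
      have e3 : (ψ.ker.subgroupOf Y₂).index = Nat.card C := by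
        have : (ψ.ker.subgroupOf Y₂).index = ψ.ker.relIndex Y₂ := rfl
        rw [this, relIndex_ker, Subgroup.map_comap_eq_self_of_surjective hψsurj]
      rw [← e1, e2, e3]
      exact isPiNumber_mul hH₁card hCcard
    have hY₂index : ∀ p : ℕ, p.Prime → p ∣ Y₂.index → p ∉ π := by
      have e : Y₂.index = C.index := index_comap_of_surjective C hψsurj
      rw [e]; exact hCindex
    -- push forward to G
    refine ⟨Y₂.map M.subtype, ?_, ?_, ?_⟩
    · exact le_trans (map_subtype_le Y₂) hMN
    · have e : Nat.card ((Y₂.map M.subtype).subgroupOf N) = Nat.card Y₂ := by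
        refine Nat.card_congr ?_
        exact ((subgroupOfEquivOfLe (le_trans (map_subtype_le Y₂) hMN)).toEquiv.trans
          (Subgroup.equivMapOfInjective Y₂ M.subtype M.subtype_injective).toEquiv.symm)
      rw [e]; exact hY₂card
    · intro p hp hpd
      have hYM : Y₂.map M.subtype ≤ M := map_subtype_le Y₂
      have e1 : ((Y₂.map M.subtype).subgroupOf N).index = (Y₂.map M.subtype).relIndex N := rfl
      have e2 : (Y₂.map M.subtype).relIndex M * M.relIndex N = (Y₂.map M.subtype).relIndex N :=
        relIndex_mul_relIndex _ M N hYM hMN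
      have e3 : (Y₂.map M.subtype).relIndex M = Y₂.index := by
        have : (Y₂.map M.subtype).subgroupOf M = Y₂ :=
          Subgroup.comap_map_eq_self_of_injective M.subtype_injective Y₂
        rw [relIndex, this]
      rw [e1, ← e2, e3] at hpd
      rcases (Nat.Prime.dvd_mul hp).mp hpd with h | h
      · exact hY₂index p hp h
      · exact hMrel p hp h
  · -- every π-Hall subgroup of N is a π-Hall subgroup of G
    intro Y hYN hY
    constructor
    · have : Nat.card (Y.subgroupOf N) = Nat.card Y :=
        Nat.card_congr (subgroupOfEquivOfLe hYN).toEquiv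
      rw [← this]; exact hY.1
    · intro p hp hpd
      rw [← relIndex_mul_index hYN] at hpd
      rcases (Nat.Prime.dvd_mul hp).mp hpd with h | h
      · exact hY.2 p hp h
      · exact hNpi' p hp h
end

section
/- Let π be a set of primes, G a finite group, A ⊴ G, and H a π-Hall subgroup of A such that G = A * N_G(H). Then the index |G : N_G(H)| is a π'-number. -/
/-- If `A ⊴ G` and `H` is a `π`-Hall subgroup of `A` with `G = A * N_G(H)`, then
`|G : N_G(H)|` is a `π'`-number. -/
theorem index_normalizer_pi_prime {G : Type*} [Group G] [Finite G] (π : Set ℕ)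
    (A H : Subgroup G) [A.Normal]
    (hHA : H ≤ A) (hH : IsHallSubgroup π (H.subgroupOf A))
    (hfrat : ∀ g : G, ∃ a ∈ A, ∃ m ∈ Subgroup.normalizer (H : Set G), g = a * m) :
    ∀ p : ℕ, p.Prime → p ∣ (Subgroup.normalizer (H : Set G)).index → p ∉ π := by
  set N := Subgroup.normalizer (H : Set G) with hN
  -- A ⊔ N = ⊤
  have hsup : A ⊔ N = ⊤ := by
    rw [eq_top_iff]
    intro g _
    obtain ⟨a, ha, m, hm, rfl⟩ := hfrat g
    exact mul_mem (Subgroup.mem_sup_left ha) (Subgroup.mem_sup_right hm)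
  -- A.relIndex N = A.index
  have h1 : A.relIndex N = A.index := by
    have := Subgroup.relIndex_sup_right (K := A) (H := N)
    rw [sup_comm, hsup] at this
    rw [← this, Subgroup.relIndex_top_right]
  -- key: N.relIndex A = N.index
  have key : N.relIndex A = N.index := by
    have e1 : N.relIndex (A ⊓ ⊤) * A.relIndex ⊤ = (N ⊓ A).relIndex ⊤ :=
      Subgroup.relIndex_inf_mul_relIndex N A ⊤
    rw [inf_top_eq, Subgroup.relIndex_top_right, Subgroup.relIndex_top_right] at e1
    have e2 : (N ⊓ A).relIndex N * N.index = (N ⊓ A).index :=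
      Subgroup.relIndex_mul_index inf_le_left
    rw [Subgroup.inf_relIndex_left, h1] at e2
    have hAi : A.index ≠ 0 := Subgroup.index_ne_zero_of_finite
    have : N.relIndex A * A.index = A.index * N.index := by rw [e1, ← e2]
    rw [mul_comm (N.relIndex A) A.index] at this
    exact Nat.eq_of_mul_eq_mul_left (Nat.pos_of_ne_zero hAi) this
  intro p hp hpd
  have hdvd : N.relIndex A ∣ H.relIndex A :=
    Subgroup.relIndex_dvd_of_le_left A (Subgroup.le_normalizer)
  have : p ∣ (H.subgroupOf A).index := by
    rw [← Subgroup.relIndex]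
    exact hpd.trans (key ▸ hdvd)
  exact hH.2 p hp this
end
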